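/- Let N ≥ 1, let α ∈ (0,1), let R be a real N×N matrix and d ∈ ℝ^N, and suppose the affine operator T(x) = Rx + d on ℝ^N is α-averaged. Then every eigenvalue λ ∈ ℂ of R satisfies |λ − (1 − α)| ≤ α; consequently |λ| ≤ 1, with |λ| = 1 if and only if λ = 1. -/

import Mathlib

open Filter Topology

/-- `T` is an `α`-averaged operator on `ℝ^N` (Euclidean norm). -/
def IsAveragedOp {N : ℕ} (α : ℝ)
    (T : EuclideanSpace ℝ (Fin N) → EuclideanSpace ℝ (Fin N)) : Prop :=
  ∀ x y : EuclideanSpace ℝ (Fin N),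
    ‖T x - T y‖ ^ 2 + ((1 - α) / α) * ‖(x - T x) - (y - T y)‖ ^ 2 ≤ ‖x - y‖ ^ 2

lemma normsq_aux {N : ℕ} (a b : EuclideanSpace ℝ (Fin N)) (p q : ℝ) :
    ‖p • a - q • b‖ ^ 2 + ‖q • a + p • b‖ ^ 2 = (p ^ 2 + q ^ 2) * (‖a‖ ^ 2 + ‖b‖ ^ 2) := by
  have h1 := norm_sub_sq_real (p • a) (q • b)
  have h2 := norm_add_sq_real (q • a) (p • b)
  simp only [norm_smul, real_inner_smul_left, real_inner_smul_right, Real.norm_eq_abs,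
    mul_pow, sq_abs] at h1 h2
  rw [h1, h2]; ring

lemma final_aux {α : ℝ} (hα0 : 0 < α) (hα1 : α < 1) (lam : ℂ)
    (main : lam.re ^ 2 + lam.im ^ 2 + (1 - α) / α * ((1 - lam.re) ^ 2 + lam.im ^ 2) ≤ 1) :
    ‖lam - ((1 : ℂ) - (α : ℂ))‖ ≤ α ∧
      ‖lam‖ ≤ 1 ∧ (‖lam‖ = 1 ↔ lam = 1) := by
  set p : ℝ := lam.re
  set q : ℝ := lam.im
  have hc : (0 : ℝ) < (1 - α) / α := div_pos (by linarith) hα0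
  have hca : α * ((1 - α) / α) = 1 - α := by field_simp
  have main' : α * (p ^ 2 + q ^ 2) + (1 - α) * ((1 - p) ^ 2 + q ^ 2) ≤ α := by
    nlinarith [mul_le_mul_of_nonneg_left main hα0.le, hca]
  have habs1 : ‖lam - ((1 : ℂ) - (α : ℂ))‖ ≤ α := by
    have hsq : (‖lam - ((1 : ℂ) - (α : ℂ))‖) ^ 2 ≤ α ^ 2 := by
      rw [Complex.sq_norm, Complex.normSq_apply]
      simp only [Complex.sub_re, Complex.sub_im, Complex.one_re, Complex.one_im,
        Complex.ofReal_re, Complex.ofReal_im, sub_zero, zero_sub]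
      nlinarith [main']
    nlinarith [norm_nonneg (lam - ((1 : ℂ) - (α : ℂ))), hα0]
  have habs2 : ‖lam‖ ≤ 1 := by
    have hsq : (‖lam‖) ^ 2 ≤ 1 := by
      rw [Complex.sq_norm, Complex.normSq_apply]
      nlinarith [main, hc, sq_nonneg (1 - p), sq_nonneg q]
    nlinarith [norm_nonneg lam]
  refine ⟨habs1, habs2, ?_, ?_⟩
  · intro h1
    have hsq : p * p + q * q = 1 := by
      have := congrArg (· ^ 2) h1
      simp only [Complex.sq_norm, Complex.normSq_apply, one_pow] at this
      simpa using this
    have hz : (1 - p) ^ 2 + q ^ 2 ≤ 0 := by nlinarith [main, hc]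
    have hp : p = 1 := by nlinarith [sq_nonneg (1 - p), sq_nonneg q]
    have hq : q = 0 := by nlinarith [sq_nonneg (1 - p), sq_nonneg q]
    exact Complex.ext hp hq
  · intro h1
    simp [h1]

set_option maxHeartbeats 1000000 in
/-- If the affine operator `x ↦ R x + d` on `ℝ^N` is `α`-averaged, then every (complex)
eigenvalue `λ` of `R` satisfies `|λ − (1−α)| ≤ α`; consequently `|λ| ≤ 1`, with equality
iff `λ = 1`. -/
theorem stmt_6 {N : ℕ} (hN : 1 ≤ N) {α : ℝ} (hα : α ∈ Set.Ioo (0 : ℝ) 1)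
    (R : Matrix (Fin N) (Fin N) ℝ) (d : EuclideanSpace ℝ (Fin N))
    (hT : IsAveragedOp α (fun x =>
      (EuclideanSpace.equiv (Fin N) ℝ).symm (R.mulVec (EuclideanSpace.equiv (Fin N) ℝ x)) + d))
    (lam : ℂ) (hlam : lam ∈ spectrum ℂ (R.map (algebraMap ℝ ℂ))) :
    ‖lam - ((1 : ℂ) - (α : ℂ))‖ ≤ α ∧
      ‖lam‖ ≤ 1 ∧ (‖lam‖ = 1 ↔ lam = 1) := by
  obtain ⟨hα0, hα1⟩ := hα
  set c : ℝ := (1 - α) / α with hcdef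
  have hc : (0 : ℝ) < c := div_pos (by linarith) hα0
  -- key inequality for arbitrary real vectors
  have key : ∀ u : EuclideanSpace ℝ (Fin N),
      ‖(EuclideanSpace.equiv (Fin N) ℝ).symm (R.mulVec (EuclideanSpace.equiv (Fin N) ℝ u))‖ ^ 2
        + c * ‖u - (EuclideanSpace.equiv (Fin N) ℝ).symm
            (R.mulVec (EuclideanSpace.equiv (Fin N) ℝ u))‖ ^ 2 ≤ ‖u‖ ^ 2 := by
    intro u
    have h := hT u 0
    simp only [map_zero, Matrix.mulVec_zero, zero_add, sub_zero] at h
    have e1 : (EuclideanSpace.equiv (Fin N) ℝ).symm (R.mulVec (EuclideanSpace.equiv (Fin N) ℝ u))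
        + d - d = (EuclideanSpace.equiv (Fin N) ℝ).symm
          (R.mulVec (EuclideanSpace.equiv (Fin N) ℝ u)) := by abel
    have e2 : u - ((EuclideanSpace.equiv (Fin N) ℝ).symm
          (R.mulVec (EuclideanSpace.equiv (Fin N) ℝ u)) + d) - (0 - d)
        = u - (EuclideanSpace.equiv (Fin N) ℝ).symm
          (R.mulVec (EuclideanSpace.equiv (Fin N) ℝ u)) := by abel
    rw [e1, e2] at h
    exact h
  -- eigenvector of complexified matrix
  have hspec : lam ∈ spectrum ℂ (Matrix.toLinAlgEquiv' (R.map (algebraMap ℝ ℂ))) := by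
    rwa [AlgEquiv.spectrum_eq Matrix.toLinAlgEquiv' (R.map (algebraMap ℝ ℂ))]
  have hev : Module.End.HasEigenvalue (Matrix.toLinAlgEquiv' (R.map (algebraMap ℝ ℂ))) lam :=
    Module.End.HasEigenvalue.of_mem_spectrum hspec
  obtain ⟨v, hv⟩ := hev.exists_hasEigenvector
  have hveq : (R.map (algebraMap ℝ ℂ)).mulVec v = lam • v := by
    have := hv.apply_eq_smul
    rwa [Matrix.toLinAlgEquiv'_apply] at this
  have hvne : v ≠ 0 := hv.right
  set p : ℝ := lam.re
  set q : ℝ := lam.im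
  set a : EuclideanSpace ℝ (Fin N) := WithLp.toLp 2 (fun i => (v i).re) with ha
  set b : EuclideanSpace ℝ (Fin N) := WithLp.toLp 2 (fun i => (v i).im) with hb
  have hvc : ∀ i, ∑ j, (R i j : ℂ) * v j = lam * v i := by
    intro i
    have := congrFun hveq i
    simpa [Matrix.mulVec, dotProduct, Matrix.map_apply] using this
  have hre : ∀ i, R.mulVec a i = p * a i - q * b i := by
    intro i
    have := congrArg Complex.re (hvc i)
    simp only [Complex.re_sum, Complex.mul_re, Complex.ofReal_re, Complex.ofReal_im,
      zero_mul, sub_zero] at this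
    simpa [Matrix.mulVec, dotProduct, ha, hb] using this
  have him : ∀ i, R.mulVec b i = q * a i + p * b i := by
    intro i
    have := congrArg Complex.im (hvc i)
    simp only [Complex.im_sum, Complex.mul_im, Complex.ofReal_re, Complex.ofReal_im,
      zero_mul, add_zero] at this
    have h2 : ∑ j, R i j * (v j).im = lam.im * (v i).re + lam.re * (v i).im := by
      linarith [this]
    simpa [Matrix.mulVec, dotProduct, ha, hb] using h2
  have hAa : (EuclideanSpace.equiv (Fin N) ℝ).symm
      (R.mulVec ((EuclideanSpace.equiv (Fin N) ℝ) a)) = p • a - q • b := by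
    ext i
    exact hre i
  have hAb : (EuclideanSpace.equiv (Fin N) ℝ).symm
      (R.mulVec ((EuclideanSpace.equiv (Fin N) ℝ) b)) = q • a + p • b := by
    ext i
    exact him i
  -- positivity of s
  have hs : 0 < ‖a‖ ^ 2 + ‖b‖ ^ 2 := by
    have : a ≠ 0 ∨ b ≠ 0 := by
      by_contra hcon
      push_neg at hcon
      apply hvne
      funext i
      have h1 : (v i).re = 0 := by
        simpa [ha] using congrArg (fun x : EuclideanSpace ℝ (Fin N) => x i) hcon.1
      have h2 : (v i).im = 0 := by
        simpa [hb] using congrArg (fun x : EuclideanSpace ℝ (Fin N) => x i) hcon.2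
      exact Complex.ext h1 h2
    rcases this with h | h
    · have := norm_pos_iff.mpr h
      nlinarith [norm_nonneg b]
    · have := norm_pos_iff.mpr h
      nlinarith [norm_nonneg a]
  -- combine
  have ka := key a
  have kb := key b
  rw [hAa] at ka
  rw [hAb] at kb
  have ea : a - (p • a - q • b) = (1 - p) • a - (-q) • b := by module
  have eb : b - (q • a + p • b) = (-q) • a + (1 - p) • b := by module
  rw [ea] at ka
  rw [eb] at kb
  have n1 := normsq_aux a b p q
  have n2 := normsq_aux a b (1 - p) (-q)
  have main : p ^ 2 + q ^ 2 + c * ((1 - p) ^ 2 + q ^ 2) ≤ 1 := by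
    have hsum : (p ^ 2 + q ^ 2) * (‖a‖ ^ 2 + ‖b‖ ^ 2)
        + c * (((1 - p) ^ 2 + (-q) ^ 2) * (‖a‖ ^ 2 + ‖b‖ ^ 2)) ≤ ‖a‖ ^ 2 + ‖b‖ ^ 2 := by
      nlinarith [ka, kb, n1, n2]
    nlinarith [hsum, hs, hc]
  exact final_aux hα0 hα1 lam main
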